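/- arXiv:1603.08055 — 4 statements merged into one kernel-verified Lean document; each statement's English description precedes it below -/
import Mathlib

section
/- Let f : ℝ → ℝ be four times continuously differentiable on an open interval containing [a,b] with a < b, and M := sup_{x ∈ (a,b)} |f⁗(x)| < ∞. Then |∫_a^b f(x) dx - ((b-a)/6)·[f(a) + 4·f((a+b)/2) + f(b)]| ≤ ((b-a)⁵/2880)·M. -/
open Set

theorem classical_simpson_inequality
    (f : ℝ → ℝ) (a b c d : ℝ) (hab : a < b) (hca : c < a) (hbd : b < d)
    (hf : ContDiffOn ℝ 4 f (Set.Ioo c d))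
    (M : ℝ) (hM : M = sSup ((fun x => |iteratedDeriv 4 f x|) '' Set.Ioo a b))
    (hbdd : BddAbove ((fun x => |iteratedDeriv 4 f x|) '' Set.Ioo a b)) :
    |(∫ x in a..b, f x) - ((b-a)/6) * (f a + 4 * f ((a+b)/2) + f b)|
      ≤ ((b-a)^5 / 2880) * M := by
  set m := (a+b)/2 with hm
  set h := (b-a)/2 with hh
  have hh0 : 0 < h := by rw [hh]; linarith
  -- derivatives
  set f1 := deriv f with hf1d
  set f2 := deriv f1 with hf2d
  set f3 := deriv f2 with hf3d
  have hco1 : ContDiffOn ℝ 3 f1 (Ioo c d) := hf.deriv_of_isOpen isOpen_Ioo (by norm_num)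
  have hco2 : ContDiffOn ℝ 2 f2 (Ioo c d) := hco1.deriv_of_isOpen isOpen_Ioo (by norm_num)
  have hco3 : ContDiffOn ℝ 1 f3 (Ioo c d) := hco2.deriv_of_isOpen isOpen_Ioo (by norm_num)
  have hd : ∀ (g : ℝ → ℝ), DifferentiableOn ℝ g (Ioo c d) →
      ∀ x ∈ Ioo c d, HasDerivAt g (deriv g x) x := fun g hg x hx =>
    (hg.differentiableAt (isOpen_Ioo.mem_nhds hx)).hasDerivAt
  have hd0 : ∀ x ∈ Ioo c d, HasDerivAt f (f1 x) x :=
    hd f (hf.differentiableOn (by norm_num))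
  have hd1 : ∀ x ∈ Ioo c d, HasDerivAt f1 (f2 x) x :=
    hd f1 (hco1.differentiableOn (by norm_num))
  have hd2 : ∀ x ∈ Ioo c d, HasDerivAt f2 (f3 x) x :=
    hd f2 (hco2.differentiableOn (by norm_num))
  have hd3 : ∀ x ∈ Ioo c d, HasDerivAt f3 (deriv f3 x) x :=
    hd f3 (hco3.differentiableOn (by norm_num))
  -- f4 = iteratedDeriv 4
  have hf4eq : deriv f3 = iteratedDeriv 4 f := by
    rw [hf3d, hf2d, hf1d]
    rw [show (4:ℕ) = 3+1 from rfl, iteratedDeriv_succ, show (3:ℕ) = 2+1 from rfl,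
      iteratedDeriv_succ, show (2:ℕ) = 1+1 from rfl, iteratedDeriv_succ,
      show (1:ℕ) = 0+1 from rfl, iteratedDeriv_succ, iteratedDeriv_zero]
  -- M facts
  have hMb : ∀ x ∈ Ioo a b, |deriv f3 x| ≤ M := by
    intro x hx
    rw [hf4eq, hM]
    exact le_csSup hbdd ⟨x, hx, rfl⟩
  have hmab : m ∈ Ioo a b := by constructor <;> (rw [hm]; linarith)
  have hMnn : 0 ≤ M := le_trans (abs_nonneg _) (hMb m hmab)
  -- inclusions
  have hIab : Icc a b ⊆ Ioo c d := fun x hx =>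
    ⟨lt_of_lt_of_le hca hx.1, lt_of_le_of_lt hx.2 hbd⟩
  have hmemp : ∀ t ∈ Icc (0:ℝ) h, m + t ∈ Icc a b := by
    intro t ht; obtain ⟨h0, h1⟩ := ht
    constructor <;> (rw [hm]; rw [hh] at h1; linarith)
  have hmemm : ∀ t ∈ Icc (0:ℝ) h, m - t ∈ Icc a b := by
    intro t ht; obtain ⟨h0, h1⟩ := ht
    constructor <;> (rw [hm]; rw [hh] at h1; linarith)
  have hmcd : m ∈ Ioo c d := hIab ⟨hmab.1.le, hmab.2.le⟩
  -- F and FTC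
  have hcf : ContinuousOn f (Ioo c d) := hf.continuousOn
  have hFint : ∀ y ∈ Ioo c d, IntervalIntegrable f MeasureTheory.volume m y := by
    intro y hy
    apply ContinuousOn.intervalIntegrable
    exact hcf.mono (Set.OrdConnected.uIcc_subset Set.ordConnected_Ioo hmcd hy)
  set F : ℝ → ℝ := fun u => ∫ x in m..u, f x with hFdef
  have hFTC : ∀ y ∈ Ioo c d, HasDerivAt F (f y) y := by
    intro y hy
    exact intervalIntegral.integral_hasDerivAt_right (hFint y hy)
      (hcf.stronglyMeasurableAtFilter isOpen_Ioo y hy)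
      (hcf.continuousAt (isOpen_Ioo.mem_nhds hy))
  -- the auxiliary functions
  set g : ℝ → ℝ := fun t => F (m+t) - F (m-t) - t/3 * (f (m-t) + 4 * f m + f (m+t)) with hgdef
  set g1 : ℝ → ℝ := fun t => 2/3 * (f (m+t) + f (m-t)) - 4/3 * f m
      - t/3 * (f1 (m+t) - f1 (m-t)) with hg1def
  set g2 : ℝ → ℝ := fun t => 1/3 * (f1 (m+t) - f1 (m-t)) - t/3 * (f2 (m+t) + f2 (m-t)) with hg2def
  set g3 : ℝ → ℝ := fun t => -(t/3) * (f3 (m+t) - f3 (m-t)) with hg3def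
  -- inner derivatives
  have hinp : ∀ t : ℝ, HasDerivAt (fun s : ℝ => m + s) 1 t := fun t => by
    simpa using (hasDerivAt_id t).const_add m
  have hinm : ∀ t : ℝ, HasDerivAt (fun s : ℝ => m - s) (-1) t := fun t => by
    simpa using (hasDerivAt_id t).const_sub m
  -- derivative chain, for t ∈ Icc 0 h
  have hgd : ∀ t ∈ Icc (0:ℝ) h, HasDerivAt g (g1 t) t := by
    intro t ht
    have h1 : m + t ∈ Ioo c d := hIab (hmemp t ht)
    have h2 : m - t ∈ Ioo c d := hIab (hmemm t ht)
    have H1 : HasDerivAt (fun s : ℝ => F (m+s)) (f (m+t) * 1) t :=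
      (hFTC _ h1).comp t (hinp t)
    have H2 : HasDerivAt (fun s : ℝ => F (m-s)) (f (m-t) * (-1)) t :=
      (hFTC _ h2).comp t (hinm t)
    have C1 : HasDerivAt (fun s : ℝ => f (m-s)) (f1 (m-t) * (-1)) t :=
      (hd0 _ h2).comp t (hinm t)
    have C2 : HasDerivAt (fun s : ℝ => f (m+s)) (f1 (m+t) * 1) t :=
      (hd0 _ h1).comp t (hinp t)
    have B1 : HasDerivAt (fun s : ℝ => s/3) (1/3) t := by
      simpa using (hasDerivAt_id t).div_const 3
    have B2 : HasDerivAt (fun s : ℝ => f (m-s) + 4 * f m + f (m+s))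
        (f1 (m-t) * (-1) + f1 (m+t) * 1) t := by
      exact (C1.add_const (4 * f m)).add C2
    have := (H1.sub H2).sub (B1.mul B2)
    rw [hgdef, hg1def]
    exact this.congr_deriv (by ring)
  have hg1d : ∀ t ∈ Icc (0:ℝ) h, HasDerivAt g1 (g2 t) t := by
    intro t ht
    have h1 : m + t ∈ Ioo c d := hIab (hmemp t ht)
    have h2 : m - t ∈ Ioo c d := hIab (hmemm t ht)
    have C1 : HasDerivAt (fun s : ℝ => f (m+s)) (f1 (m+t) * 1) t :=
      (hd0 _ h1).comp t (hinp t)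
    have C2 : HasDerivAt (fun s : ℝ => f (m-s)) (f1 (m-t) * (-1)) t :=
      (hd0 _ h2).comp t (hinm t)
    have D1 : HasDerivAt (fun s : ℝ => f1 (m+s)) (f2 (m+t) * 1) t :=
      (hd1 _ h1).comp t (hinp t)
    have D2 : HasDerivAt (fun s : ℝ => f1 (m-s)) (f2 (m-t) * (-1)) t :=
      (hd1 _ h2).comp t (hinm t)
    have B1 : HasDerivAt (fun s : ℝ => s/3) (1/3) t := by
      simpa using (hasDerivAt_id t).div_const 3
    have := (((C1.add C2).const_mul (2/3 : ℝ)).sub_const (4/3 * f m)).sub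
      (B1.mul (D1.sub D2))
    rw [hg1def, hg2def]
    exact this.congr_deriv (by simp only [Pi.add_apply, Pi.sub_apply]; ring)
  have hg2d : ∀ t ∈ Icc (0:ℝ) h, HasDerivAt g2 (g3 t) t := by
    intro t ht
    have h1 : m + t ∈ Ioo c d := hIab (hmemp t ht)
    have h2 : m - t ∈ Ioo c d := hIab (hmemm t ht)
    have D1 : HasDerivAt (fun s : ℝ => f1 (m+s)) (f2 (m+t) * 1) t :=
      (hd1 _ h1).comp t (hinp t)
    have D2 : HasDerivAt (fun s : ℝ => f1 (m-s)) (f2 (m-t) * (-1)) t :=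
      (hd1 _ h2).comp t (hinm t)
    have E1 : HasDerivAt (fun s : ℝ => f2 (m+s)) (f3 (m+t) * 1) t :=
      (hd2 _ h1).comp t (hinp t)
    have E2 : HasDerivAt (fun s : ℝ => f2 (m-s)) (f3 (m-t) * (-1)) t :=
      (hd2 _ h2).comp t (hinm t)
    have B1 : HasDerivAt (fun s : ℝ => s/3) (1/3) t := by
      simpa using (hasDerivAt_id t).div_const 3
    have := ((D1.sub D2).const_mul (1/3 : ℝ)).sub (B1.mul (E1.add E2))
    rw [hg2def, hg3def]
    exact this.congr_deriv (by simp only [Pi.add_apply, Pi.sub_apply]; ring)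
  -- MVT bound on g3
  have hg3bound : ∀ t ∈ Ico (0:ℝ) h, ‖g3 t‖ ≤ 2/3 * M * t^2 := by
    intro t ht
    have ht' : t ∈ Icc (0:ℝ) h := ⟨ht.1, ht.2.le⟩
    rcases eq_or_lt_of_le ht.1 with h0 | h0
    · rw [hg3def]; simp [← h0]
    have hlt : m - t < m + t := by linarith
    have hIsub : Icc (m-t) (m+t) ⊆ Ioo c d := by
      intro x hx
      exact hIab ⟨le_trans (hmemm t ht').1 hx.1, le_trans hx.2 (hmemp t ht').2⟩
    obtain ⟨ξ, hξ, hsl⟩ := exists_hasDerivAt_eq_slope f3 (deriv f3) hlt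
      (hco3.continuousOn.mono hIsub)
      (fun x hx => hd3 x (hIsub ⟨hx.1.le, hx.2.le⟩))
    have hξab : ξ ∈ Ioo a b := by
      have h1 := (hmemm t ht').1
      have h2 := (hmemp t ht').2
      exact ⟨lt_of_le_of_lt h1 hξ.1, lt_of_lt_of_le hξ.2 h2⟩
    have hdiff : f3 (m+t) - f3 (m-t) = deriv f3 ξ * (2*t) := by
      have hne : m + t - (m - t) ≠ 0 := by intro hc; apply absurd hc; intro hc'; nlinarith
      field_simp at hsl
      linarith [hsl]
    rw [hg3def]
    simp only [Real.norm_eq_abs]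
    rw [hdiff, abs_mul, abs_mul, abs_neg, abs_of_nonneg (by positivity : (0:ℝ) ≤ t/3),
      abs_of_nonneg (by positivity : (0:ℝ) ≤ 2*t)]
    have := hMb ξ hξab
    nlinarith [abs_nonneg (deriv f3 ξ)]
  -- continuity of g, g1, g2 on Icc 0 h
  have hcg : ContinuousOn g (Icc 0 h) := fun t ht =>
    ((hgd t ht).continuousAt).continuousWithinAt
  have hcg1 : ContinuousOn g1 (Icc 0 h) := fun t ht =>
    ((hg1d t ht).continuousAt).continuousWithinAt
  have hcg2 : ContinuousOn g2 (Icc 0 h) := fun t ht =>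
    ((hg2d t ht).continuousAt).continuousWithinAt
  -- stage A : |g2 t| ≤ 2/9 M t³
  have stA : ∀ t ∈ Icc (0:ℝ) h, ‖g2 t‖ ≤ 2/9 * M * t^3 := by
    apply image_norm_le_of_norm_deriv_right_le_deriv_boundary hcg2
      (fun x hx => (hg2d x ⟨hx.1, hx.2.le⟩).hasDerivWithinAt)
      (by
        have : g2 0 = 0 := by rw [hg2def]; simp
        rw [this]; simp)
      (B' := fun t => 2/3 * M * t^2)
      (fun x => by
        have := (hasDerivAt_pow 3 x).const_mul (2/9 * M)
        exact this.congr_deriv (by push_cast; ring))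
      hg3bound
  have stB : ∀ t ∈ Icc (0:ℝ) h, ‖g1 t‖ ≤ 1/18 * M * t^4 := by
    apply image_norm_le_of_norm_deriv_right_le_deriv_boundary hcg1
      (fun x hx => (hg1d x ⟨hx.1, hx.2.le⟩).hasDerivWithinAt)
      (by
        have : g1 0 = 0 := by rw [hg1def]; simp; ring
        rw [this]; simp)
      (B' := fun t => 2/9 * M * t^3)
      (fun x => by
        have := (hasDerivAt_pow 4 x).const_mul (1/18 * M)
        exact this.congr_deriv (by push_cast; ring))
      (fun x hx => stA x ⟨hx.1, hx.2.le⟩)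
  have stC : ∀ t ∈ Icc (0:ℝ) h, ‖g t‖ ≤ 1/90 * M * t^5 := by
    apply image_norm_le_of_norm_deriv_right_le_deriv_boundary hcg
      (fun x hx => (hgd x ⟨hx.1, hx.2.le⟩).hasDerivWithinAt)
      (by
        have : g 0 = 0 := by rw [hgdef]; simp
        rw [this]; simp)
      (B' := fun t => 1/18 * M * t^4)
      (fun x => by
        have := (hasDerivAt_pow 5 x).const_mul (1/90 * M)
        exact this.congr_deriv (by push_cast; ring))
      (fun x hx => stB x ⟨hx.1, hx.2.le⟩)
  -- conclusion
  have hfin := stC h ⟨hh0.le, le_rfl⟩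
  have hb' : m + h = b := by rw [hm, hh]; ring
  have ha' : m - h = a := by rw [hm, hh]; ring
  have hacd : a ∈ Ioo c d := ⟨hca, hab.trans hbd⟩
  have hbcd : b ∈ Ioo c d := ⟨hca.trans hab, hbd⟩
  have hFsub : F b - F a = ∫ x in a..b, f x :=
    intervalIntegral.integral_interval_sub_left (hFint b hbcd) (hFint a hacd)
  have hgh : g h = (∫ x in a..b, f x) - ((b-a)/6) * (f a + 4 * f m + f b) := by
    rw [hgdef]
    simp only [hb', ha']
    rw [hFsub, hh]
    ring
  rw [← hgh, ← Real.norm_eq_abs]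
  refine hfin.trans (le_of_eq ?_)
  rw [hh]; ring
end

section
/- For f(x) = exp(x²) on [0,1], the Simpson rule error satisfies |∫_0^1 exp(x²) dx - (1/6)·[f(0) + 4·f(1/2) + f(1)]| ≤ (1/5760)·[|f⁗(1/2)| + |f⁗(1)|], and the right-hand side equals (1/5760)·(e^{1/4}·(16·(1/2)⁴ + 48·(1/2)² + 12) + e·(16 + 48 + 12)), which is strictly smaller than the classical bound (1/2880)·sup_{x∈(0,1)} |f⁗(x)| = (1/2880)·76·e. -/
open Real intervalIntegral

private lemma step' (p p' : ℝ → ℝ) (hp : ∀ x, HasDerivAt p (p' x) x) (x : ℝ) :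
    HasDerivAt (fun x => p x * Real.exp (x^2))
      (p' x * Real.exp (x^2) + p x * (2*x*Real.exp (x^2))) x := by
  have he : HasDerivAt (fun x : ℝ => Real.exp (x^2)) (2*x*Real.exp (x^2)) x := by
    have := (hasDerivAt_pow 2 x).exp
    convert this using 1
    push_cast; ring
  exact (hp x).mul he

private lemma iter4' : ∀ x : ℝ, iteratedDeriv 4 (fun x => Real.exp (x^2)) x
    = (16*x^4 + 48*x^2 + 12) * Real.exp (x^2) := by
  have e1 : deriv (fun x : ℝ => Real.exp (x^2)) = fun x => (2*x) * Real.exp (x^2) := by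
    funext x
    have h := step' (fun _ => 1) (fun _ => 0) (fun x => hasDerivAt_const x 1) x
    simp only [one_mul] at h
    have h2 : HasDerivAt (fun x : ℝ => Real.exp (x^2)) ((2*x) * Real.exp (x^2)) x := by
      convert h using 1; ring
    exact h2.deriv
  have e2 : deriv (fun x : ℝ => (2*x) * Real.exp (x^2))
      = fun x => (4*x^2+2) * Real.exp (x^2) := by
    funext x
    have h := step' (fun x => 2*x) (fun _ => 2)
      (fun x => by simpa using (hasDerivAt_id x).const_mul 2) x
    have h2 : HasDerivAt (fun x : ℝ => (2*x) * Real.exp (x^2)) ((4*x^2+2) * Real.exp (x^2)) x := by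
      convert h using 1; ring
    exact h2.deriv
  have e3 : deriv (fun x : ℝ => (4*x^2+2) * Real.exp (x^2))
      = fun x => (8*x^3+12*x) * Real.exp (x^2) := by
    funext x
    have hp : ∀ x : ℝ, HasDerivAt (fun x : ℝ => 4*x^2+2) (8*x) x := by
      intro x
      have := ((hasDerivAt_pow 2 x).const_mul 4).add_const 2
      refine this.congr_deriv ?_; push_cast; ring
    have h := step' (fun x => 4*x^2+2) (fun x => 8*x) hp x
    have h2 : HasDerivAt (fun x : ℝ => (4*x^2+2) * Real.exp (x^2))
        ((8*x^3+12*x) * Real.exp (x^2)) x := by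
      convert h using 1; ring
    exact h2.deriv
  have e4 : deriv (fun x : ℝ => (8*x^3+12*x) * Real.exp (x^2))
      = fun x => (16*x^4+48*x^2+12) * Real.exp (x^2) := by
    funext x
    have hp : ∀ x : ℝ, HasDerivAt (fun x : ℝ => 8*x^3+12*x) (24*x^2+12) x := by
      intro x
      have := ((hasDerivAt_pow 3 x).const_mul 8).add ((hasDerivAt_id x).const_mul 12)
      refine this.congr_deriv ?_; push_cast; ring
    have h := step' (fun x => 8*x^3+12*x) (fun x => 24*x^2+12) hp x
    have h2 : HasDerivAt (fun x : ℝ => (8*x^3+12*x) * Real.exp (x^2))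
        ((16*x^4+48*x^2+12) * Real.exp (x^2)) x := by
      convert h using 1; ring
    exact h2.deriv
  intro x
  rw [show (4:ℕ) = 3+1 from rfl, iteratedDeriv_succ,
      show (3:ℕ) = 2+1 from rfl, iteratedDeriv_succ,
      show (2:ℕ) = 1+1 from rfl, iteratedDeriv_succ,
      iteratedDeriv_one, e1, e2, e3, e4]

private lemma taylor_bd' : ∀ x ∈ Set.Icc (0:ℝ) 1,
    |Real.exp (x^2) - (1 + x^2 + x^4/2 + x^6/6)| ≤ 5/96 * x^8 := by
  intro x hx
  obtain ⟨h0, h1⟩ := hx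
  have hx2 : |x^2| ≤ 1 := by
    rw [abs_of_nonneg (sq_nonneg x)]
    nlinarith
  have := Real.exp_bound hx2 (n := 4) (by norm_num)
  have hs : ∑ i ∈ Finset.range 4, (x^2)^i / (Nat.factorial i) = 1 + x^2 + x^4/2 + x^6/6 := by
    simp [Finset.sum_range_succ, Nat.factorial]
    ring
  rw [hs] at this
  calc |Real.exp (x^2) - (1 + x^2 + x^4/2 + x^6/6)|
      ≤ |x^2|^4 * ((4:ℕ).succ / ((Nat.factorial 4) * 4)) := this
    _ = 5/96 * x^8 := by
        rw [abs_of_nonneg (sq_nonneg x)]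
        norm_num [Nat.factorial]
        ring

private lemma Pint' : (∫ x in (0:ℝ)..1, (1 + x^2 + x^4/2 + x^6/6)) = 51/35 := by
  have : (∫ x in (0:ℝ)..1, (1 + x^2 + x^4/2 + x^6/6))
      = (∫ x in (0:ℝ)..1, (1 + x^2 + (1/2)*x^4 + (1/6)*x^6)) := by
    congr 1; funext x; ring
  rw [this]
  rw [integral_add, integral_add, integral_add]
  · rw [integral_const, integral_pow, integral_const_mul, integral_pow,
      integral_const_mul, integral_pow]
    norm_num
  all_goals
    apply Continuous.intervalIntegrable
    continuity

private lemma Ibound' : |(∫ x in (0:ℝ)..1, Real.exp (x^2)) - 51/35| ≤ 5/864 := by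
  have hcf : Continuous fun x : ℝ => Real.exp (x^2) := by fun_prop
  have hcp : Continuous fun x : ℝ => (1 + x^2 + x^4/2 + x^6/6) := by continuity
  have hif : IntervalIntegrable (fun x : ℝ => Real.exp (x^2)) MeasureTheory.volume 0 1 :=
    hcf.intervalIntegrable 0 1
  have hip : IntervalIntegrable (fun x : ℝ => (1 + x^2 + x^4/2 + x^6/6))
      MeasureTheory.volume 0 1 := hcp.intervalIntegrable 0 1
  have hsub : (∫ x in (0:ℝ)..1, Real.exp (x^2)) - 51/35
      = ∫ x in (0:ℝ)..1, (Real.exp (x^2) - (1 + x^2 + x^4/2 + x^6/6)) := by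
    rw [integral_sub hif hip, Pint']
  rw [hsub]
  calc |∫ x in (0:ℝ)..1, (Real.exp (x^2) - (1 + x^2 + x^4/2 + x^6/6))|
      ≤ ∫ x in (0:ℝ)..1, |Real.exp (x^2) - (1 + x^2 + x^4/2 + x^6/6)| :=
        intervalIntegral.abs_integral_le_integral_abs (by norm_num)
    _ ≤ ∫ x in (0:ℝ)..1, (5/96 * x^8) := by
        apply intervalIntegral.integral_mono_on (by norm_num)
        · exact (hcf.sub hcp).abs.intervalIntegrable 0 1
        · exact (Continuous.intervalIntegrable (by continuity) 0 1)
        · exact taylor_bd'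
    _ = 5/864 := by rw [integral_const_mul, integral_pow]; norm_num

theorem simpson_exp_sq_example :
    let f : ℝ → ℝ := fun x => Real.exp (x^2)
    |(∫ x in (0:ℝ)..1, f x) - (1/6) * (f 0 + 4 * f (1/2) + f 1)|
        ≤ (1/5760) * (|iteratedDeriv 4 f (1/2)| + |iteratedDeriv 4 f 1|) ∧
    (1/5760) * (|iteratedDeriv 4 f (1/2)| + |iteratedDeriv 4 f 1|)
        = (1/5760) * (Real.exp (1/4) * (16*(1/2)^4 + 48*(1/2)^2 + 12)
            + Real.exp 1 * (16 + 48 + 12)) ∧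
    (1/5760) * (|iteratedDeriv 4 f (1/2)| + |iteratedDeriv 4 f 1|)
        < (1/2880) * (76 * Real.exp 1) := by
  intro f
  set q := Real.exp (1/4 : ℝ) with hq
  have hqpos : 0 < q := Real.exp_pos _
  have hepos : 0 < Real.exp 1 := Real.exp_pos 1
  have heq : Real.exp 1 = q^4 := by
    rw [hq, ← Real.exp_nat_mul]; norm_num
  have he1 : Real.exp 1 < 2.7182818286 := Real.exp_one_lt_d9
  have he2 : (2.7182818283 : ℝ) < Real.exp 1 := Real.exp_one_gt_d9
  have hqu : q ≤ 1.29 := by nlinarith [sq_nonneg q, sq_nonneg (q-1.29), sq_nonneg (q+1.29)]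
  have hql : (1.28 : ℝ) ≤ q := by
    by_contra h
    push_neg at h
    have h4 : q^4 < (1.28:ℝ)^4 := by
      have h2 : q^2 < (1.28:ℝ)^2 := by nlinarith
      nlinarith [sq_nonneg q]
    nlinarith
  have hd12 : iteratedDeriv 4 f (1/2) = 25 * q := by
    have := iter4' (1/2)
    simp only [f, this]
    norm_num [hq]
  have hd1 : iteratedDeriv 4 f 1 = 76 * Real.exp 1 := by
    have := iter4' 1
    simp only [f, this]
    norm_num
  have habs12 : |iteratedDeriv 4 f (1/2)| = 25 * q := by
    rw [hd12, abs_of_pos (by positivity)]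
  have habs1 : |iteratedDeriv 4 f 1| = 76 * Real.exp 1 := by
    rw [hd1, abs_of_pos (by positivity)]
  refine ⟨?_, ?_, ?_⟩
  · have hI := Ibound'
    have hS : (1/6 : ℝ) * (f 0 + 4 * f (1/2) + f 1) = (1 + 4*q + Real.exp 1)/6 := by
      simp only [f]
      norm_num [hq]
      ring
    rw [habs12, habs1, hS]
    have htri : |(∫ x in (0:ℝ)..1, f x) - (1 + 4*q + Real.exp 1)/6|
        ≤ |(∫ x in (0:ℝ)..1, f x) - 51/35| + |51/35 - (1 + 4*q + Real.exp 1)/6| :=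
      abs_sub_le _ _ _
    have h2 : |51/35 - (1 + 4*q + Real.exp (1:ℝ))/6| ≤ 0.023 := by
      rw [abs_le]
      constructor <;> nlinarith
    have : |(∫ x in (0:ℝ)..1, f x) - 51/35| ≤ 5/864 := hI
    calc |(∫ x in (0:ℝ)..1, f x) - (1 + 4*q + Real.exp 1)/6|
        ≤ 5/864 + 0.023 := by linarith
      _ ≤ (1/5760) * (25*q + 76*Real.exp 1) := by nlinarith
  · rw [habs12, habs1, hq]
    norm_num
    ring
  · rw [habs12, habs1]
    nlinarith
end

section
/- Let f : [a,b] → ℝ be of bounded variation with a < b. Then |∫_a^b f(x) dx - ((b-a)/6)·[f(a) + 4·f((a+b)/2) + f(b)]| ≤ ((b-a)/3)·V_a^b(f), where V_a^b(f) is the total variation of f on [a,b]. -/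
open Set intervalIntegral MeasureTheory

theorem simpson_bounded_variation
    (f : ℝ → ℝ) (a b : ℝ) (hab : a < b)
    (hbv : BoundedVariationOn f (Set.Icc a b)) :
    |(∫ x in a..b, f x) - ((b-a)/6) * (f a + 4 * f ((a+b)/2) + f b)|
      ≤ ((b-a)/3) * (eVariationOn f (Set.Icc a b)).toReal := by
  set c : ℝ := (5*a+b)/6 with hc
  set m : ℝ := (a+b)/2 with hm
  set d : ℝ := (a+5*b)/6 with hd
  have hac : a ≤ c := by rw [hc]; linarith
  have hcm : c ≤ m := by rw [hc, hm]; linarith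
  have hmd : m ≤ d := by rw [hm, hd]; linarith
  have hdb : d ≤ b := by rw [hd]; linarith
  -- integrability of f on subintervals of [a,b]
  obtain ⟨p, q, hp, hq, hpq⟩ :=
    hbv.locallyBoundedVariationOn.exists_monotoneOn_sub_monotoneOn
  have hfint : ∀ u v : ℝ, a ≤ u → u ≤ v → v ≤ b → IntervalIntegrable f volume u v := by
    intro u v hau huv hvb
    have hsub : uIcc u v ⊆ Icc a b := by
      rw [uIcc_of_le huv]; exact Icc_subset_Icc hau hvb
    have := ((hp.mono hsub).intervalIntegrable (μ := volume)).sub ((hq.mono hsub).intervalIntegrable)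
    rw [hpq]; exact this
  -- pointwise bound by local variation
  have hfin : ∀ u v : ℝ, a ≤ u → v ≤ b → eVariationOn f (Icc u v) ≠ ⊤ :=
    fun u v hu hv => hbv.mono (Icc_subset_Icc hu hv)
  have key : ∀ u v x k : ℝ, a ≤ u → v ≤ b → x ∈ Icc u v → k ∈ Icc u v →
      |f x - f k| ≤ (eVariationOn f (Icc u v)).toReal := by
    intro u v x k hu hv hx hk
    have h1 : edist (f x) (f k) ≤ eVariationOn f (Icc u v) :=
      eVariationOn.edist_le f hx hk
    have h2 := ENNReal.toReal_mono (hfin u v hu hv) h1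
    rwa [← Real.dist_eq, dist_edist]
    -- dist = edist.toReal
  -- split the integral
  have i1 := hfint a c le_rfl hac (hcm.trans (hmd.trans hdb))
  have i2 := hfint c m hac hcm (hmd.trans hdb)
  have i3 := hfint m d (hac.trans hcm) hmd hdb
  have i4 := hfint d b (hac.trans (hcm.trans hmd)) hdb le_rfl
  have hsplit : (∫ x in a..b, f x) = (∫ x in a..c, f x) + (∫ x in c..m, f x)
      + (∫ x in m..d, f x) + (∫ x in d..b, f x) := by
    rw [integral_add_adjacent_intervals i1 i2, integral_add_adjacent_intervals (i1.trans i2) i3,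
      integral_add_adjacent_intervals ((i1.trans i2).trans i3) i4]
  -- rewrite each piece with the constant removed
  have e1 : (∫ x in a..c, (f x - f a)) = (∫ x in a..c, f x) - (c - a) * f a := by
    rw [intervalIntegral.integral_sub i1 intervalIntegrable_const, intervalIntegral.integral_const, smul_eq_mul]
  have e2 : (∫ x in c..m, (f x - f m)) = (∫ x in c..m, f x) - (m - c) * f m := by
    rw [intervalIntegral.integral_sub i2 intervalIntegrable_const, intervalIntegral.integral_const, smul_eq_mul]
  have e3 : (∫ x in m..d, (f x - f m)) = (∫ x in m..d, f x) - (d - m) * f m := by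
    rw [intervalIntegral.integral_sub i3 intervalIntegrable_const, intervalIntegral.integral_const, smul_eq_mul]
  have e4 : (∫ x in d..b, (f x - f b)) = (∫ x in d..b, f x) - (b - d) * f b := by
    rw [intervalIntegral.integral_sub i4 intervalIntegrable_const, intervalIntegral.integral_const, smul_eq_mul]
  have hE : (∫ x in a..b, f x) - ((b-a)/6) * (f a + 4 * f m + f b)
      = (∫ x in a..c, (f x - f a)) + (∫ x in c..m, (f x - f m))
        + (∫ x in m..d, (f x - f m)) + (∫ x in d..b, (f x - f b)) := by
    rw [e1, e2, e3, e4, hsplit, hc, hd, hm]; ring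
  -- bound each piece
  set V1 := (eVariationOn f (Icc a c)).toReal
  set V2 := (eVariationOn f (Icc c m)).toReal
  set V3 := (eVariationOn f (Icc m d)).toReal
  set V4 := (eVariationOn f (Icc d b)).toReal
  have b1 : |∫ x in a..c, (f x - f a)| ≤ V1 * |c - a| := by
    rw [← Real.norm_eq_abs]
    apply intervalIntegral.norm_integral_le_of_norm_le_const
    intro x hx
    rw [Real.norm_eq_abs]
    rw [uIoc_of_le hac] at hx
    exact key a c x a le_rfl (hcm.trans (hmd.trans hdb)) (Ioc_subset_Icc_self hx)
      (left_mem_Icc.2 hac)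
  have b2 : |∫ x in c..m, (f x - f m)| ≤ V2 * |m - c| := by
    rw [← Real.norm_eq_abs]
    apply intervalIntegral.norm_integral_le_of_norm_le_const
    intro x hx
    rw [Real.norm_eq_abs]
    rw [uIoc_of_le hcm] at hx
    exact key c m x m hac (hmd.trans hdb) (Ioc_subset_Icc_self hx) (right_mem_Icc.2 hcm)
  have b3 : |∫ x in m..d, (f x - f m)| ≤ V3 * |d - m| := by
    rw [← Real.norm_eq_abs]
    apply intervalIntegral.norm_integral_le_of_norm_le_const
    intro x hx
    rw [Real.norm_eq_abs]
    rw [uIoc_of_le hmd] at hx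
    exact key m d x m (hac.trans hcm) hdb (Ioc_subset_Icc_self hx) (left_mem_Icc.2 hmd)
  have b4 : |∫ x in d..b, (f x - f b)| ≤ V4 * |b - d| := by
    rw [← Real.norm_eq_abs]
    apply intervalIntegral.norm_integral_le_of_norm_le_const
    intro x hx
    rw [Real.norm_eq_abs]
    rw [uIoc_of_le hdb] at hx
    exact key d b x b (hac.trans (hcm.trans hmd)) le_rfl (Ioc_subset_Icc_self hx)
      (right_mem_Icc.2 hdb)
  -- additivity of variation
  have inter_eq : ∀ u v : ℝ, a ≤ u → v ≤ b → Icc a b ∩ Icc u v = Icc u v :=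
    fun u v hu hv => inter_eq_self_of_subset_right (Icc_subset_Icc hu hv)
  have hadd : eVariationOn f (Icc a c) + eVariationOn f (Icc c m)
      + eVariationOn f (Icc m d) + eVariationOn f (Icc d b) = eVariationOn f (Icc a b) := by
    have A1 := eVariationOn.Icc_add_Icc f (s := Icc a b) hac hcm
      ⟨hac, hcm.trans (hmd.trans hdb)⟩
    have A2 := eVariationOn.Icc_add_Icc f (s := Icc a b) (hac.trans hcm) hmd
      ⟨hac.trans hcm, hmd.trans hdb⟩
    have A3 := eVariationOn.Icc_add_Icc f (s := Icc a b) (hac.trans (hcm.trans hmd)) hdb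
      ⟨hac.trans (hcm.trans hmd), hdb⟩
    rw [inter_eq a c le_rfl ((hcm.trans (hmd.trans hdb))),
      inter_eq c m hac (hmd.trans hdb), inter_eq a m le_rfl (hmd.trans hdb)] at A1
    rw [inter_eq a m le_rfl (hmd.trans hdb), inter_eq m d (hac.trans hcm) hdb,
      inter_eq a d le_rfl hdb] at A2
    rw [inter_eq a d le_rfl hdb, inter_eq d b (hac.trans (hcm.trans hmd)) le_rfl,
      inter_eq a b le_rfl le_rfl] at A3
    rw [A1, A2, A3]
  have haddR : V1 + V2 + V3 + V4 = (eVariationOn f (Icc a b)).toReal := by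
    rw [← hadd, ENNReal.toReal_add, ENNReal.toReal_add, ENNReal.toReal_add]
    · exact hfin a c le_rfl (hcm.trans (hmd.trans hdb))
    · exact hfin c m hac (hmd.trans hdb)
    · exact ENNReal.add_ne_top.2 ⟨hfin a c le_rfl (hcm.trans (hmd.trans hdb)),
        hfin c m hac (hmd.trans hdb)⟩
    · exact hfin m d (hac.trans hcm) hdb
    · exact ENNReal.add_ne_top.2 ⟨ENNReal.add_ne_top.2 ⟨hfin a c le_rfl
        (hcm.trans (hmd.trans hdb)), hfin c m hac (hmd.trans hdb)⟩,
        hfin m d (hac.trans hcm) hdb⟩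
    · exact hfin d b (hac.trans (hcm.trans hmd)) le_rfl
  -- finish
  have hca : |c - a| = (b-a)/6 := by rw [abs_of_nonneg (by linarith), hc]; ring
  have hmc : |m - c| = (b-a)/3 := by rw [abs_of_nonneg (by linarith), hm, hc]; ring
  have hdm : |d - m| = (b-a)/3 := by rw [abs_of_nonneg (by linarith), hd, hm]; ring
  have hbd : |b - d| = (b-a)/6 := by rw [abs_of_nonneg (by linarith), hd]; ring
  rw [hca] at b1; rw [hmc] at b2; rw [hdm] at b3; rw [hbd] at b4
  have hV1 : 0 ≤ V1 := ENNReal.toReal_nonneg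
  have hV2 : 0 ≤ V2 := ENNReal.toReal_nonneg
  have hV3 : 0 ≤ V3 := ENNReal.toReal_nonneg
  have hV4 : 0 ≤ V4 := ENNReal.toReal_nonneg
  calc |(∫ x in a..b, f x) - ((b-a)/6) * (f a + 4 * f ((a+b)/2) + f b)|
      ≤ |∫ x in a..c, (f x - f a)| + |∫ x in c..m, (f x - f m)|
        + |∫ x in m..d, (f x - f m)| + |∫ x in d..b, (f x - f b)| := by
        rw [← hm, hE]
        exact (abs_add_le _ _).trans (add_le_add_left ((abs_add_le _ _).trans
          (add_le_add_left (abs_add_le _ _) _)) _)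
    _ ≤ V1 * ((b-a)/6) + V2 * ((b-a)/3) + V3 * ((b-a)/3) + V4 * ((b-a)/6) := by
        gcongr
    _ ≤ ((b-a)/3) * (V1 + V2 + V3 + V4) := by nlinarith
    _ = ((b-a)/3) * (eVariationOn f (Set.Icc a b)).toReal := by rw [haddR]
end

section
/- Let f : [a,b] → ℝ be differentiable with f' of bounded variation on [a,b], a < b. Then |∫_a^b f(x) dx - ((b-a)/6)·[f(a) + 4·f((a+b)/2) + f(b)]| ≤ ((b-a)²/24)·V_a^b(f'). -/
open MeasureTheory Set

private lemma kernel_bound1 (a b c : ℝ) (hab : a ≤ b) (h1 : a ≤ c) (h2 : c ≤ (a+b)/2) :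
    |((((a+b)/2)^2 - c^2)/2 - ((a+b)/2 - c)*((5*a+b)/6)) +
      ((b^2 - ((a+b)/2)^2)/2 - (b - (a+b)/2)*((a+5*b)/6))| ≤ (b-a)^2/24 := by
  rw [abs_le]
  constructor <;> nlinarith [sq_nonneg (c - (5*a+b)/6), sq_nonneg (c - a), sq_nonneg (c - (a+b)/2), sq_nonneg (b-a)]

private lemma kernel_bound2 (a b c : ℝ) (hab : a ≤ b) (h1 : (a+b)/2 ≤ c) (h2 : c ≤ b) :
    |(b^2 - c^2)/2 - (b - c)*((a+5*b)/6)| ≤ (b-a)^2/24 := by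
  rw [abs_le]
  constructor <;> nlinarith [sq_nonneg (c - (a+5*b)/6), sq_nonneg (c - b), sq_nonneg (c - (a+b)/2), sq_nonneg (b-a)]

private lemma add_self_monotoneOn {f : ℝ → ℝ} {s : Set ℝ} (hf : LocallyBoundedVariationOn f s)
    {a : ℝ} (as : a ∈ s) : MonotoneOn (fun x => variationOnFromTo f s a x + f x) s := by
  rintro b bs c cs bc
  dsimp only
  have h1 : f b - f c ≤ variationOnFromTo f s b c := by
    calc f b - f c ≤ |f b - f c| := le_abs_self _
    _ = dist (f b) (f c) := (Real.dist_eq _ _).symm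
    _ ≤ variationOnFromTo f s b c := by
      rw [variationOnFromTo.eq_of_le f s bc, dist_edist]
      exact ENNReal.toReal_mono (hf b c bs cs)
        (eVariationOn.edist_le f ⟨bs, le_rfl, bc⟩ ⟨cs, bc, le_rfl⟩)
  have h2 := variationOnFromTo.add hf as bs cs
  linarith


private lemma key_mono (K g : ℝ → ℝ) (a b M : ℝ) (hab : a ≤ b)
    (hKmeas : Measurable K)
    (hKint : IntegrableOn K (Set.Ioc a b))
    (hg : Monotone g)
    (hga : ∀ x, x ≤ a → g x = g a) (hgb : ∀ x, b ≤ x → g x = g b)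
    (hM : ∀ c ∈ Set.Icc a b, |∫ x in Set.Ioc c b, K x| ≤ M)
    (h0 : (∫ x in Set.Ioc a b, K x) = 0) :
    |∫ x in Set.Ioc a b, K x * g x| ≤ M * (g b - g a) := by
  have hgle : g a ≤ g b := hg hab
  have hM0 : 0 ≤ M := by
    have := hM b ⟨hab, le_rfl⟩
    simpa using this
  have hgbdd : ∀ x, g a ≤ g x ∧ g x ≤ g b := by
    intro x
    constructor
    · rcases le_total a x with h | h
      · exact hg h
      · exact (hga x h).ge
    · rcases le_total x b with h | h
      · exact hg h
      · exact (hgb x h).le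
  have hgmeas : Measurable g := hg.measurable
  -- integrability of (g - g a) * K on Ioc a b
  have hgaK : IntegrableOn (fun x => (g x - g a) * K x) (Set.Ioc a b) := by
    refine hKint.bdd_mul (c := |g b - g a|) ?_ (Filter.Eventually.of_forall fun x => ?_)
    · exact (hgmeas.sub measurable_const).aestronglyMeasurable
    · rw [Real.norm_eq_abs]
      rcases hgbdd x with ⟨h1, h2⟩
      rw [abs_of_nonneg (by linarith), abs_of_nonneg (by linarith)]
      linarith
  -- step 1: reduce to (g - g a) * K
  have e1 : (∫ x in Set.Ioc a b, K x * g x) = ∫ x in Set.Ioc a b, (g x - g a) * K x := by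
    have hfe : (fun x => K x * g x) = fun x => (g x - g a) * K x + g a * K x := by
      funext x; ring
    rw [hfe, integral_add hgaK (hKint.const_mul _), integral_const_mul, h0, mul_zero, add_zero]
  rw [e1]
  classical
  set S : Set (ℝ × ℝ) := {p : ℝ × ℝ | g a < p.2 ∧ p.2 ≤ g p.1} with hS
  set F : ℝ → ℝ → ℝ := fun x t =>
    (Set.Ioc a b).indicator (fun x' => K x' * (Set.Ioc (g a) (g x')).indicator (fun _ => (1:ℝ)) t) x
    with hF
  have hF_eq : ∀ x t, F x t =
      (Set.Ioc a b).indicator K x * S.indicator (fun _ => (1:ℝ)) (x, t) := by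
    intro x t
    by_cases hx : x ∈ Set.Ioc a b
    · simp only [hF, Set.indicator_of_mem hx]
      have : (Set.Ioc (g a) (g x)).indicator (fun _ => (1:ℝ)) t
          = S.indicator (fun _ => (1:ℝ)) (x, t) := by
        by_cases ht : t ∈ Set.Ioc (g a) (g x)
        · rw [Set.indicator_of_mem ht, Set.indicator_of_mem (by exact ⟨ht.1, ht.2⟩)]
        · rw [Set.indicator_of_notMem ht, Set.indicator_of_notMem (fun h => ht ⟨h.1, h.2⟩)]
      rw [this]
    · simp [hF, Set.indicator_of_notMem hx]
  have hSmeas : MeasurableSet S := by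
    have h1 : MeasurableSet {p : ℝ × ℝ | g a < p.2} := measurableSet_lt measurable_const measurable_snd
    have h2 : MeasurableSet {p : ℝ × ℝ | p.2 ≤ g p.1} :=
      measurableSet_le measurable_snd (hgmeas.comp measurable_fst)
    exact h1.inter h2
  have hFmeas : Measurable (Function.uncurry F) := by
    have : Function.uncurry F = fun p : ℝ × ℝ =>
        (Set.Ioc a b).indicator K p.1 * S.indicator (fun _ => (1:ℝ)) p := by
      funext p; exact hF_eq p.1 p.2
    rw [this]
    exact ((hKmeas.indicator measurableSet_Ioc).comp measurable_fst).mul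
      (measurable_const.indicator hSmeas)
  have hFint : Integrable (Function.uncurry F) (volume.prod volume) := by
    have hdom : Integrable (fun p : ℝ × ℝ =>
        (Set.Ioc a b).indicator (fun x => |K x|) p.1 *
        (Set.Ioc (g a) (g b)).indicator (fun _ => (1:ℝ)) p.2) (volume.prod volume) := by
      apply Integrable.mul_prod
      · rw [integrable_indicator_iff measurableSet_Ioc]; exact hKint.abs
      · rw [integrable_indicator_iff measurableSet_Ioc]
        exact integrableOn_const measure_Ioc_lt_top.ne
    refine hdom.mono' hFmeas.aestronglyMeasurable ?_
    refine Filter.Eventually.of_forall fun p => ?_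
    rw [show Function.uncurry F p = F p.1 p.2 from rfl, hF_eq, Real.norm_eq_abs, abs_mul]
    have e1 : |(Set.Ioc a b).indicator K p.1| = (Set.Ioc a b).indicator (fun x => |K x|) p.1 := by
      by_cases hx : p.1 ∈ Set.Ioc a b <;> simp [Set.indicator_of_mem, Set.indicator_of_notMem, hx]
    rw [e1]
    gcongr
    · exact Set.indicator_nonneg (fun x _ => abs_nonneg _) _
    · by_cases hp : p ∈ S
      · rw [Set.indicator_of_mem hp, Set.indicator_of_mem]
        · simp
        · exact ⟨hp.1, hp.2.trans (hgbdd p.1).2⟩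
      · rw [Set.indicator_of_notMem hp]
        simpa using Set.indicator_nonneg (fun x _ => (by norm_num : (0:ℝ) ≤ 1)) _
  -- inner t-integral for fixed x
  have hA : ∀ x, (∫ t, F x t) =
      (Set.Ioc a b).indicator (fun x' => (g x' - g a) * K x') x := by
    intro x
    by_cases hx : x ∈ Set.Ioc a b
    · rw [Set.indicator_of_mem hx]
      have : (fun t => F x t) = fun t => K x * (Set.Ioc (g a) (g x)).indicator (fun _ => (1:ℝ)) t := by
        funext t; rw [hF]; simp [Set.indicator_of_mem hx]
      rw [this, integral_const_mul, integral_indicator_const _ measurableSet_Ioc]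
      have : (volume (Set.Ioc (g a) (g x))).toReal = g x - g a := by
        rw [Real.volume_Ioc, ENNReal.toReal_ofReal (by linarith [(hgbdd x).1])]
      rw [measureReal_def, this, smul_eq_mul, mul_one]; ring
    · rw [Set.indicator_of_notMem hx]
      have : (fun t => F x t) = fun _ => 0 := by
        funext t; rw [hF]; simp [Set.indicator_of_notMem hx]
      rw [this, integral_zero]
  -- bound on the inner x-integral after swapping
  have hbound : ∀ t, |∫ x, F x t| ≤ M * (Set.Ioc (g a) (g b)).indicator (fun _ => (1:ℝ)) t := by
    intro t
    have hIeq : (∫ x, F x t) = ∫ x in Set.Ioc a b,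
        K x * (Set.Ioc (g a) (g x)).indicator (fun _ => (1:ℝ)) t := by
      rw [hF, integral_indicator measurableSet_Ioc]
    by_cases h2 : g a < t
    · by_cases htb : t ≤ g b
      · -- main case
        have htmem : t ∈ Set.Ioc (g a) (g b) := ⟨h2, htb⟩
        rw [Set.indicator_of_mem htmem, mul_one]
        set T : Set ℝ := {x | t ≤ g x} with hT
        have hTmeas : MeasurableSet T := measurableSet_le measurable_const hgmeas
        have hint_eq : Set.EqOn (fun x => K x * (Set.Ioc (g a) (g x)).indicator (fun _ => (1:ℝ)) t)
            (T.indicator K) (Set.Ioc a b) := by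
          intro x _
          dsimp only
          by_cases hxT : t ≤ g x
          · rw [Set.indicator_of_mem (show t ∈ Set.Ioc (g a) (g x) from ⟨h2, hxT⟩),
              Set.indicator_of_mem (show x ∈ T from hxT), mul_one]
          · rw [Set.indicator_of_notMem (fun h => hxT h.2),
              Set.indicator_of_notMem (show x ∉ T from hxT), mul_zero]
        rw [hIeq, setIntegral_congr_fun measurableSet_Ioc hint_eq, setIntegral_indicator hTmeas]
        have hTb : b ∈ T := htb
        have hne : (T ∩ Set.Icc a b).Nonempty := ⟨b, hTb, ⟨hab, le_rfl⟩⟩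
        have hbdd : BddBelow (T ∩ Set.Icc a b) := ⟨a, fun y hy => hy.2.1⟩
        set c := sInf (T ∩ Set.Icc a b) with hc
        have hca : a ≤ c := le_csInf hne fun y hy => hy.2.1
        have hcb : c ≤ b := csInf_le hbdd ⟨hTb, hab, le_rfl⟩
        have hsub1 : Set.Ioc c b ⊆ Set.Ioc a b ∩ T := by
          intro x hx
          obtain ⟨y, hy, hyx⟩ := exists_lt_of_csInf_lt hne hx.1
          exact ⟨⟨lt_of_le_of_lt hca hx.1, hx.2⟩, le_trans hy.1 (hg hyx.le)⟩
        have hsub2 : Set.Ioc a b ∩ T ⊆ Set.Icc c b := fun x hx =>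
          ⟨csInf_le hbdd ⟨hx.2, hx.1.1.le, hx.1.2⟩, hx.1.2⟩
        have haeeq : (Set.Ioc a b ∩ T : Set ℝ) =ᵐ[volume] (Set.Ioc c b : Set ℝ) := by
          rw [MeasureTheory.ae_eq_set]
          constructor
          · refine measure_mono_null (fun x hx => ?_) (measure_singleton c)
            have h1 := hsub2 hx.1
            have hxc : x ≤ c := by
              by_contra hlt
              push_neg at hlt
              exact hx.2 ⟨hlt, h1.2⟩
            exact le_antisymm hxc h1.1
          · have : Set.Ioc c b \ (Set.Ioc a b ∩ T) = ∅ := Set.diff_eq_empty.2 hsub1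
            rw [this]; exact measure_empty
        rw [setIntegral_congr_set haeeq]
        exact hM c ⟨hca, hcb⟩
      · -- t > g b : integrand vanishes
        push_neg at htb
        have : (∫ x, F x t) = 0 := by
          rw [hIeq]
          rw [setIntegral_congr_fun measurableSet_Ioc (fun x _ => ?_), integral_zero]
          rw [Set.indicator_of_notMem (fun h => absurd h.2 (by push_neg; exact lt_of_le_of_lt (hgbdd x).2 htb)), mul_zero]
        rw [this, Set.indicator_of_notMem (fun h => absurd h.2 (not_le.2 htb))]
        simp
    · -- t ≤ g a : integrand vanishes
      have : (∫ x, F x t) = 0 := by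
        rw [hIeq]
        rw [setIntegral_congr_fun measurableSet_Ioc (fun x _ => ?_), integral_zero]
        rw [Set.indicator_of_notMem (fun h => h2 h.1), mul_zero]
      rw [this, Set.indicator_of_notMem (fun h => h2 h.1)]
      simp
  -- put everything together
  have e2 : (∫ x in Set.Ioc a b, (g x - g a) * K x) = ∫ x, ∫ t, F x t := by
    rw [show (fun x => ∫ t, F x t) = (Set.Ioc a b).indicator (fun x' => (g x' - g a) * K x') from funext hA,
      integral_indicator measurableSet_Ioc]
  have hswap := MeasureTheory.integral_integral_swap hFint
  have hdomint : Integrable (fun t => M * (Set.Ioc (g a) (g b)).indicator (fun _ => (1:ℝ)) t) volume := by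
    apply Integrable.const_mul
    rw [integrable_indicator_iff measurableSet_Ioc]
    exact integrableOn_const measure_Ioc_lt_top.ne
  calc |∫ x in Set.Ioc a b, (g x - g a) * K x| = |∫ t, ∫ x, F x t| := by
        rw [e2, hswap]
    _ ≤ ∫ t, M * (Set.Ioc (g a) (g b)).indicator (fun _ => (1:ℝ)) t := by
        refine norm_integral_le_of_norm_le (f := fun t => ∫ x, F x t) hdomint ?_
        exact Filter.Eventually.of_forall fun t => by
          rw [Real.norm_eq_abs]; exact hbound t
    _ = M * (g b - g a) := by
        rw [integral_const_mul, integral_indicator_const _ measurableSet_Ioc, measureReal_def, Real.volume_Ioc,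
          ENNReal.toReal_ofReal (by linarith), smul_eq_mul, mul_one]


private lemma bdd_integrableOn' {f : ℝ → ℝ} {s : Set ℝ} {C : ℝ} (hs : MeasurableSet s)
    (hvol : volume s < ⊤) (hm : AEStronglyMeasurable f (volume.restrict s))
    (hC : ∀ x ∈ s, |f x| ≤ C) : IntegrableOn f s := by
  refine Integrable.mono' (g := fun _ => C) ?_ hm ?_
  · exact integrableOn_const hvol.ne
  · filter_upwards [ae_restrict_mem hs] with x hx
    simpa [Real.norm_eq_abs] using hC x hx

theorem simpson_deriv_bounded_variation
    (f : ℝ → ℝ) (a b : ℝ) (hab : a < b)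
    (hdiff : ∀ x ∈ Set.Icc a b, HasDerivAt f (deriv f x) x)
    (hbv : BoundedVariationOn (deriv f) (Set.Icc a b)) :
    |(∫ x in a..b, f x) - ((b-a)/6) * (f a + 4 * f ((a+b)/2) + f b)|
      ≤ ((b-a)^2 / 24) * (eVariationOn (deriv f) (Set.Icc a b)).toReal := by
  set f' := deriv f with hf'def
  set m : ℝ := (a+b)/2 with hmdef
  set c₁ : ℝ := (5*a+b)/6 with hc1def
  set c₂ : ℝ := (a+5*b)/6 with hc2def
  set K : ℝ → ℝ := fun x => if x ≤ m then x - c₁ else x - c₂ with hKdef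
  have hab' : a ≤ b := hab.le
  have ham : a ≤ m := by rw [hmdef]; linarith
  have hmb : m ≤ b := by rw [hmdef]; linarith
  have hKmeas : Measurable K := by
    rw [hKdef]
    exact Measurable.ite (measurableSet_le measurable_id measurable_const)
      (measurable_id.sub measurable_const) (measurable_id.sub measurable_const)
  have hKbd : ∀ x ∈ Set.Icc a b, |K x| ≤ b - a := by
    intro x hx
    obtain ⟨hx1, hx2⟩ := hx
    rw [hKdef]
    dsimp only
    split_ifs with h <;> rw [abs_le] <;> constructor <;>
      (simp only [hc1def, hc2def] at *; linarith)
  set V : ℝ := (eVariationOn f' (Set.Icc a b)).toReal with hVdef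
  have hf'meas : Measurable f' := measurable_deriv f
  have hf'bd : ∀ x ∈ Set.Icc a b, |f' x| ≤ |f' a| + V := by
    intro x hx
    have h1 : dist (f' x) (f' a) ≤ V := by
      rw [dist_edist]
      exact ENNReal.toReal_mono hbv (eVariationOn.edist_le f' hx ⟨le_rfl, hab'⟩)
    rw [Real.dist_eq] at h1
    calc |f' x| = |f' a + (f' x - f' a)| := by ring_nf
      _ ≤ |f' a| + |f' x - f' a| := abs_add_le _ _
      _ ≤ |f' a| + V := by linarith
  -- generic interval integrability of measurable functions bounded on [a,b]
  have hII : ∀ φ : ℝ → ℝ, Measurable φ → ∀ C : ℝ, (∀ x ∈ Set.Icc a b, |φ x| ≤ C) →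
      ∀ c d : ℝ, c ∈ Set.Icc a b → d ∈ Set.Icc a b → IntervalIntegrable φ volume c d := by
    intro φ hφ C hC c d hc hd
    rw [intervalIntegrable_iff]
    refine (bdd_integrableOn' measurableSet_Icc measure_Icc_lt_top
      hφ.aestronglyMeasurable.restrict hC).mono_set ?_
    exact Set.Ioc_subset_Icc_self.trans (Set.uIcc_subset_Icc hc hd)
  have has : a ∈ Set.Icc a b := ⟨le_rfl, hab'⟩
  have hbs : b ∈ Set.Icc a b := ⟨hab', le_rfl⟩
  have hms : m ∈ Set.Icc a b := ⟨ham, hmb⟩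
  have hfc : ContinuousOn f (Set.Icc a b) := fun x hx => (hdiff x hx).continuousAt.continuousWithinAt
  -- interval integrability instances
  have hf'II : ∀ c d : ℝ, c ∈ Set.Icc a b → d ∈ Set.Icc a b → IntervalIntegrable f' volume c d :=
    hII f' hf'meas _ hf'bd
  have hKf'bd : ∀ x ∈ Set.Icc a b, |K x * f' x| ≤ (b - a) * (|f' a| + V) := by
    intro x hx
    rw [abs_mul]
    exact mul_le_mul (hKbd x hx) (hf'bd x hx) (abs_nonneg _) (by linarith)
  have hKf'II : ∀ c d : ℝ, c ∈ Set.Icc a b → d ∈ Set.Icc a b →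
      IntervalIntegrable (fun x => K x * f' x) volume c d :=
    hII _ (hKmeas.mul hf'meas) _ hKf'bd
  have hKII : ∀ c d : ℝ, c ∈ Set.Icc a b → d ∈ Set.Icc a b → IntervalIntegrable K volume c d :=
    hII K hKmeas _ hKbd
  have hfII : ∀ c d : ℝ, c ∈ Set.Icc a b → d ∈ Set.Icc a b → IntervalIntegrable f volume c d := by
    intro c d hc hd
    exact (hfc.mono (Set.uIcc_subset_Icc hc hd)).intervalIntegrable
  -- integration by parts on each half
  have hsubam : Set.uIcc a m ⊆ Set.Icc a b := Set.uIcc_subset_Icc has hms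
  have hsubmb : Set.uIcc m b ⊆ Set.Icc a b := Set.uIcc_subset_Icc hms hbs
  have ibp1 : ∫ x in a..m, (x - c₁) * f' x
      = (m - c₁) * f m - (a - c₁) * f a - ∫ x in a..m, 1 * f x := by
    exact intervalIntegral.integral_mul_deriv_eq_deriv_mul
      (fun x _ => (hasDerivAt_id x).sub_const c₁)
      (fun x hx => hdiff x (hsubam hx))
      intervalIntegrable_const (hf'II a m has hms)
  have ibp2 : ∫ x in m..b, (x - c₂) * f' x
      = (b - c₂) * f b - (m - c₂) * f m - ∫ x in m..b, 1 * f x := by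
    exact intervalIntegral.integral_mul_deriv_eq_deriv_mul
      (fun x _ => (hasDerivAt_id x).sub_const c₂)
      (fun x hx => hdiff x (hsubmb hx))
      intervalIntegrable_const (hf'II m b hms hbs)
  have hcongr1 : ∫ x in a..m, K x * f' x = ∫ x in a..m, (x - c₁) * f' x := by
    apply intervalIntegral.integral_congr
    intro x hx
    rw [Set.uIcc_of_le ham] at hx
    rw [hKdef]
    dsimp only
    rw [if_pos hx.2]
  have hcongr2 : ∫ x in m..b, K x * f' x = ∫ x in m..b, (x - c₂) * f' x := by
    apply intervalIntegral.integral_congr_ae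
    refine MeasureTheory.ae_of_all _ fun x hx => ?_
    rw [Set.uIoc_of_le hmb] at hx
    rw [hKdef]
    dsimp only
    rw [if_neg (not_le.2 hx.1)]
  have hsplitK : ∫ x in a..b, K x * f' x
      = (∫ x in a..m, K x * f' x) + ∫ x in m..b, K x * f' x :=
    (intervalIntegral.integral_add_adjacent_intervals (hKf'II a m has hms) (hKf'II m b hms hbs)).symm
  have hsplitf : ∫ x in a..b, f x = (∫ x in a..m, f x) + ∫ x in m..b, f x :=
    (intervalIntegral.integral_add_adjacent_intervals (hfII a m has hms) (hfII m b hms hbs)).symm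
  have hone : ∀ c d : ℝ, (∫ x in c..d, 1 * f x) = ∫ x in c..d, f x := by
    intro c d; simp
  have hEK : (∫ x in a..b, f x) - ((b-a)/6) * (f a + 4 * f m + f b)
      = -∫ x in a..b, K x * f' x := by
    rw [hsplitK, hcongr1, hcongr2, ibp1, ibp2, hone, hone, hsplitf]
    rw [hmdef, hc1def, hc2def]
    ring
  -- kernel integral computations
  have hKval1 : ∀ c, c ≤ m → (∫ x in c..m, K x) = (m^2 - c^2)/2 - (m - c)*c₁ := by
    intro c hcm
    have e : ∫ x in c..m, K x = ∫ x in c..m, (x - c₁) := by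
      apply intervalIntegral.integral_congr
      intro x hx
      rw [Set.uIcc_of_le hcm] at hx
      rw [hKdef]; dsimp only; rw [if_pos hx.2]
    rw [e, intervalIntegral.integral_sub intervalIntegral.intervalIntegrable_id
      intervalIntegrable_const, integral_id,
      intervalIntegral.integral_const, smul_eq_mul]
  have hKval2 : ∀ c, m ≤ c → c ≤ b → (∫ x in c..b, K x) = (b^2 - c^2)/2 - (b - c)*c₂ := by
    intro c hmc hcb
    have e : ∫ x in c..b, K x = ∫ x in c..b, (x - c₂) := by
      apply intervalIntegral.integral_congr_ae
      refine MeasureTheory.ae_of_all _ fun x hx => ?_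
      rw [Set.uIoc_of_le hcb] at hx
      rw [hKdef]; dsimp only; rw [if_neg (not_le.2 (lt_of_le_of_lt hmc hx.1))]
    rw [e, intervalIntegral.integral_sub intervalIntegral.intervalIntegrable_id
      intervalIntegrable_const, integral_id,
      intervalIntegral.integral_const, smul_eq_mul]
  have hKsplit : ∀ c, c ∈ Set.Icc a b → c ≤ m →
      (∫ x in c..b, K x) = (∫ x in c..m, K x) + ∫ x in m..b, K x := by
    intro c hc hcm
    exact (intervalIntegral.integral_add_adjacent_intervals (hKII c m hc hms) (hKII m b hms hbs)).symm
  have hM : ∀ c ∈ Set.Icc a b, |∫ x in Set.Ioc c b, K x| ≤ (b-a)^2/24 := by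
    intro c hc
    rw [← intervalIntegral.integral_of_le hc.2]
    obtain ⟨hc1, hc2⟩ := hc
    rcases le_total c m with hcm | hmc
    · rw [hKsplit c ⟨hc1, hc2⟩ hcm, hKval1 c hcm, hKval2 m le_rfl hmb]
      rw [hmdef] at hcm
      rw [hmdef, hc1def, hc2def]
      exact kernel_bound1 a b c hab' hc1 hcm
    · rw [hKval2 c hmc hc2]
      rw [hmdef] at hmc
      rw [hc2def]
      exact kernel_bound2 a b c hab' hmc hc2
  have h0 : (∫ x in Set.Ioc a b, K x) = 0 := by
    rw [← intervalIntegral.integral_of_le hab', hKsplit a has ham, hKval1 a ham,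
      hKval2 m le_rfl hmb]
    rw [hmdef, hc1def, hc2def]
    ring
  -- Jordan decomposition of f' with clamping
  have hlbv : LocallyBoundedVariationOn f' (Set.Icc a b) := hbv.locallyBoundedVariationOn
  set vf : ℝ → ℝ := variationOnFromTo f' (Set.Icc a b) a with hvfdef
  set cl : ℝ → ℝ := fun x => max a (min x b) with hcldef
  have hclmem : ∀ x, cl x ∈ Set.Icc a b := fun x => ⟨le_max_left _ _, max_le hab' (min_le_right _ _)⟩
  have hclmono : Monotone cl := fun x y h => max_le_max le_rfl (min_le_min h le_rfl)
  have hclid : ∀ x ∈ Set.Icc a b, cl x = x := by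
    intro x hx
    rw [hcldef]; dsimp only; rw [min_eq_left hx.2, max_eq_right hx.1]
  have hcla : ∀ x, x ≤ a → cl x = a := by
    intro x h
    rw [hcldef]; dsimp only; rw [max_eq_left (le_trans (min_le_left x b) h)]
  have hclb : ∀ x, b ≤ x → cl x = b := by
    intro x h
    rw [hcldef]; dsimp only; rw [min_eq_right h, max_eq_right hab']
  set P : ℝ → ℝ := fun x => (vf (cl x) + f' (cl x))/2 with hPdef
  set Q : ℝ → ℝ := fun x => (vf (cl x) - f' (cl x))/2 with hQdef
  have hmono1 := add_self_monotoneOn hlbv has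
  have hmono2 := variationOnFromTo.sub_self_monotoneOn hlbv has
  have hPmono : Monotone P := by
    intro x y h
    have := hmono1 (hclmem x) (hclmem y) (hclmono h)
    dsimp only at this
    rw [hPdef]; dsimp only; linarith
  have hQmono : Monotone Q := by
    intro x y h
    have := hmono2 (hclmem x) (hclmem y) (hclmono h)
    simp only [Pi.sub_apply] at this
    rw [hQdef]; dsimp only; linarith
  have hPa : ∀ x, x ≤ a → P x = P a := by
    intro x h; rw [hPdef]; dsimp only; rw [hcla x h, hcla a le_rfl]
  have hPb : ∀ x, b ≤ x → P x = P b := by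
    intro x h; rw [hPdef]; dsimp only; rw [hclb x h, hclb b le_rfl]
  have hQa : ∀ x, x ≤ a → Q x = Q a := by
    intro x h; rw [hQdef]; dsimp only; rw [hcla x h, hcla a le_rfl]
  have hQb : ∀ x, b ≤ x → Q x = Q b := by
    intro x h; rw [hQdef]; dsimp only; rw [hclb x h, hclb b le_rfl]
  -- integrability of K·P, K·Q on Ioc a b
  have hKIoc : IntegrableOn K (Set.Ioc a b) := by
    refine bdd_integrableOn' (C := b - a) measurableSet_Ioc measure_Ioc_lt_top
      hKmeas.aestronglyMeasurable.restrict ?_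
    exact fun x hx => hKbd x (Set.Ioc_subset_Icc_self hx)
  have hKPint : IntegrableOn (fun x => K x * P x) (Set.Ioc a b) := by
    refine bdd_integrableOn' (C := (b - a) * (|P a| + |P b|)) measurableSet_Ioc measure_Ioc_lt_top
      ((hKmeas.mul hPmono.measurable).aestronglyMeasurable.restrict) ?_
    intro x hx
    rw [abs_mul]
    refine mul_le_mul (hKbd x (Set.Ioc_subset_Icc_self hx)) ?_ (abs_nonneg _) (by linarith)
    have h1 : P a ≤ P x := hPmono (Set.Ioc_subset_Icc_self hx).1
    have h2 : P x ≤ P b := hPmono (Set.Ioc_subset_Icc_self hx).2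
    rw [abs_le]
    constructor
    · calc -(|P a| + |P b|) ≤ -|P a| := by linarith [abs_nonneg (P b)]
        _ ≤ P a := neg_abs_le _
        _ ≤ P x := h1
    · calc P x ≤ P b := h2
        _ ≤ |P b| := le_abs_self _
        _ ≤ |P a| + |P b| := by linarith [abs_nonneg (P a)]
  have hKQint : IntegrableOn (fun x => K x * Q x) (Set.Ioc a b) := by
    refine bdd_integrableOn' (C := (b - a) * (|Q a| + |Q b|)) measurableSet_Ioc measure_Ioc_lt_top
      ((hKmeas.mul hQmono.measurable).aestronglyMeasurable.restrict) ?_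
    intro x hx
    rw [abs_mul]
    refine mul_le_mul (hKbd x (Set.Ioc_subset_Icc_self hx)) ?_ (abs_nonneg _) (by linarith)
    have h1 : Q a ≤ Q x := hQmono (Set.Ioc_subset_Icc_self hx).1
    have h2 : Q x ≤ Q b := hQmono (Set.Ioc_subset_Icc_self hx).2
    rw [abs_le]
    constructor
    · calc -(|Q a| + |Q b|) ≤ -|Q a| := by linarith [abs_nonneg (Q b)]
        _ ≤ Q a := neg_abs_le _
        _ ≤ Q x := h1
    · calc Q x ≤ Q b := h2
        _ ≤ |Q b| := le_abs_self _
        _ ≤ |Q a| + |Q b| := by linarith [abs_nonneg (Q a)]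
  have hsum : (∫ x in Set.Ioc a b, K x * f' x)
      = (∫ x in Set.Ioc a b, K x * P x) - ∫ x in Set.Ioc a b, K x * Q x := by
    rw [← integral_sub hKPint hKQint]
    refine setIntegral_congr_fun measurableSet_Ioc fun x hx => ?_
    have hxm : cl x = x := hclid x (Set.Ioc_subset_Icc_self hx)
    rw [hPdef, hQdef]; dsimp only; rw [hxm]; ring
  have k1 := key_mono K P a b ((b-a)^2/24) hab' hKmeas hKIoc hPmono hPa hPb hM h0
  have k2 := key_mono K Q a b ((b-a)^2/24) hab' hKmeas hKIoc hQmono hQa hQb hM h0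
  have hPQval : (P b - P a) + (Q b - Q a) = V := by
    have hclaa : cl a = a := hclid a has
    have hclbb : cl b = b := hclid b hbs
    have h1 : vf a = 0 := variationOnFromTo.self f' _ a
    have h2 : vf b = V := by
      rw [hvfdef, variationOnFromTo.eq_of_le f' _ hab', Set.inter_self, hVdef]
    rw [hPdef, hQdef]; dsimp only
    rw [hclaa, hclbb, h1, h2]; ring
  -- final assembly
  calc |(∫ x in a..b, f x) - ((b-a)/6) * (f a + 4 * f m + f b)|
      = |∫ x in a..b, K x * f' x| := by rw [hEK, abs_neg]
    _ = |∫ x in Set.Ioc a b, K x * f' x| := by rw [intervalIntegral.integral_of_le hab']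
    _ = |(∫ x in Set.Ioc a b, K x * P x) - ∫ x in Set.Ioc a b, K x * Q x| := by rw [hsum]
    _ ≤ |∫ x in Set.Ioc a b, K x * P x| + |∫ x in Set.Ioc a b, K x * Q x| := abs_sub _ _
    _ ≤ ((b-a)^2/24) * (P b - P a) + ((b-a)^2/24) * (Q b - Q a) := add_le_add k1 k2
    _ = ((b-a)^2/24) * V := by rw [← mul_add, hPQval]
end
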